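/- For all real numbers z, z̃ with 0 < z ≤ z̃ and every natural number n, I_{n+1}(z)/I_n(z̃) ≤ (z/z̃)^n · (z/2), where I_m denotes the modified Bessel function of the first kind defined by its power series. -/

import Mathlib

open Real

/-- Modified Bessel function of the first kind of integer order `m`,
defined by its power series. -/
noncomputable def besselI (m : ℕ) (z : ℝ) : ℝ :=
  ∑' k : ℕ, (1 / ((Nat.factorial k : ℝ) * (Nat.factorial (m + k) : ℝ))) * (z / 2) ^ (m + 2 * k)

lemma besselI_summable (m : ℕ) (x : ℝ) (hx : 0 ≤ x) :
    Summable (fun k : ℕ =>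
      (1 / ((Nat.factorial k : ℝ) * (Nat.factorial (m + k) : ℝ))) * (x / 2) ^ (m + 2 * k)) := by
  apply Summable.of_nonneg_of_le
  · intro k
    positivity
  · intro k
    show _ ≤ (x / 2) ^ m * (((x / 2) ^ 2) ^ k / (Nat.factorial k : ℝ))
    have h1 : (Nat.factorial k : ℝ) ≤ (Nat.factorial k : ℝ) * (Nat.factorial (m + k) : ℝ) := by
      apply le_mul_of_one_le_right
      · positivity
      · exact_mod_cast Nat.one_le_iff_ne_zero.mpr (Nat.factorial_ne_zero _)
    calc (1 / ((Nat.factorial k : ℝ) * (Nat.factorial (m + k) : ℝ))) * (x / 2) ^ (m + 2 * k)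
        ≤ (1 / (Nat.factorial k : ℝ)) * (x / 2) ^ (m + 2 * k) := by
          apply mul_le_mul_of_nonneg_right _ (by positivity)
          apply one_div_le_one_div_of_le (by positivity) h1
      _ = (x / 2) ^ m * (((x / 2) ^ 2) ^ k / (Nat.factorial k : ℝ)) := by
          rw [pow_add, ← pow_mul]; ring
  · exact (Real.summable_pow_div_factorial ((x/2)^2)).mul_left _

theorem besselI_succ_ratio_le (z ztilde : ℝ) (hz : 0 < z) (hzz : z ≤ ztilde) (n : ℕ) :
    besselI (n + 1) z / besselI n ztilde ≤ (z / ztilde) ^ n * (z / 2) := by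
  have hzt : 0 < ztilde := lt_of_lt_of_le hz hzz
  have hS := besselI_summable n ztilde hzt.le
  have hpos : 0 < besselI n ztilde := by
    have h0 : (0:ℝ) < (1 / ((Nat.factorial 0 : ℝ) * (Nat.factorial (n + 0) : ℝ)))
        * (ztilde / 2) ^ (n + 2 * 0) := by positivity
    refine lt_of_lt_of_le h0 (Summable.le_tsum hS 0 ?_)
    intro k _
    positivity
  rw [div_le_iff₀ hpos]
  unfold besselI
  rw [← tsum_mul_left]
  apply Summable.tsum_le_tsum _ (besselI_summable (n+1) z hz.le) (hS.mul_left _)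
  intro k
  have key : (z / ztilde) ^ n * (z / 2) *
      ((1 / ((Nat.factorial k : ℝ) * (Nat.factorial (n + k) : ℝ))) * (ztilde / 2) ^ (n + 2 * k))
      = (1 / ((Nat.factorial k : ℝ) * (Nat.factorial (n + k) : ℝ)))
        * ((z / 2) ^ (n + 1) * (ztilde / 2) ^ (2 * k)) := by
    have h1 : ztilde ≠ 0 := hzt.ne'
    field_simp
    have h2 : ztilde ^ n * ztilde⁻¹ ^ n = 1 := by rw [← mul_pow, mul_inv_cancel₀ h1, one_pow]
    linear_combination (z * z ^ n * ztilde ^ (k * 2) * (1 / 2 : ℝ) ^ n * (1 / 2 : ℝ) ^ (k * 2)) * h2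
  rw [key]
  have lhs_eq : (1 / ((Nat.factorial k : ℝ) * (Nat.factorial (n + 1 + k) : ℝ)))
      * (z / 2) ^ (n + 1 + 2 * k)
      = (1 / ((Nat.factorial k : ℝ) * (Nat.factorial (n + 1 + k) : ℝ)))
        * ((z / 2) ^ (n + 1) * (z / 2) ^ (2 * k)) := by
    rw [pow_add]
  rw [lhs_eq]
  have hf : ((Nat.factorial (n + k) : ℝ)) ≤ (Nat.factorial (n + 1 + k) : ℝ) := by
    exact_mod_cast Nat.factorial_le (by omega)
  gcongr
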